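/- Let H₀ be a bounded self-adjoint operator on a complex Hilbert space 𝓗. For every E ∈ ℝ, ε > 0 and every v ∈ 𝓗, one has −Im⟨v, ((E + iε) − H₀)⁻¹ v⟩ ≥ (ε / ((|E| + ‖H₀‖)² + ε²)) · ‖v‖². -/

import Mathlib

noncomputable section

open ContinuousLinearMap Complex

lemma aux_im_zero {𝓗 : Type*} [NormedAddCommGroup 𝓗] [InnerProductSpace ℂ 𝓗] [CompleteSpace 𝓗]
    (T : 𝓗 →L[ℂ] 𝓗) (hT : IsSelfAdjoint T) (x : 𝓗) : (inner ℂ (T x) x : ℂ).im = 0 := by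
  have h1 : (inner ℂ (T x) x : ℂ) = inner ℂ x (T x) := hT.isSymmetric x x
  have h2 : (inner ℂ x (T x) : ℂ) = starRingEnd ℂ (inner ℂ (T x) x) := (inner_conj_symm _ _).symm
  have h3 := congrArg Complex.im (h1.trans h2)
  rw [Complex.conj_im] at h3
  linarith

/-- For a bounded self-adjoint operator `H₀` on a complex Hilbert space,
every `E ∈ ℝ`, `ε > 0` and every vector `v`,
`−Im ⟨v, ((E + iε) − H₀)⁻¹ v⟩ ≥ (ε / ((|E| + ‖H₀‖)² + ε²)) ‖v‖²`. -/
theorem stmt8 {𝓗 : Type*} [NormedAddCommGroup 𝓗] [InnerProductSpace ℂ 𝓗] [CompleteSpace 𝓗]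
    (H₀ : 𝓗 →L[ℂ] 𝓗) (hH₀ : IsSelfAdjoint H₀)
    (E ε : ℝ) (hε : 0 < ε) (v : 𝓗) :
    (ε / ((|E| + ‖H₀‖) ^ 2 + ε ^ 2)) * ‖v‖ ^ 2 ≤
      -(inner ℂ v ((Ring.inverse (((E : ℂ) + ε * Complex.I) • 1 - H₀)) v) : ℂ).im := by
  set z : ℂ := (E : ℂ) + ε * Complex.I with hz
  set A : 𝓗 →L[ℂ] 𝓗 := z • 1 - H₀ with hAdef
  have hzre : z.re = E := by simp [hz]
  have hzim : z.im = ε := by simp [hz]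
  have hznotmem : z ∉ spectrum ℂ H₀ := by
    intro hmem
    have h := hH₀.mem_spectrum_eq_re hmem
    have : z.im = 0 := by rw [h]; simp
    rw [hzim] at this; exact hε.ne' this
  have hunit : IsUnit A := by
    have := spectrum.notMem_iff.mp hznotmem
    rwa [Algebra.algebraMap_eq_smul_one] at this
  set w : 𝓗 := Ring.inverse A v with hw
  have hAw : A w = v := by
    have h1 : A * Ring.inverse A = 1 := Ring.mul_inverse_cancel A hunit
    calc A w = (A * Ring.inverse A) v := rfl
    _ = v := by rw [h1]; simp
  have hHre : (inner ℂ (H₀ w) w : ℂ).im = 0 := aux_im_zero H₀ hH₀ w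
  have hinner : (inner ℂ v (Ring.inverse A v) : ℂ) = inner ℂ (A w) w := by rw [hAw, ← hw]
  have hAw_expand : A w = z • w - H₀ w := by simp [hAdef, sub_apply, smul_apply]
  have hww : (inner ℂ w w : ℂ) = ((‖w‖ ^ 2 : ℝ) : ℂ) := by
    rw [inner_self_eq_norm_sq_to_K]; norm_cast
  have him : (inner ℂ v (Ring.inverse A v) : ℂ).im = -(ε * ‖w‖ ^ 2) := by
    rw [hinner, hAw_expand, inner_sub_left, inner_smul_left, hww]
    simp only [Complex.sub_im, Complex.mul_im, hHre, hzim, Complex.conj_im, Complex.conj_re,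
      Complex.ofReal_im, Complex.ofReal_re, Complex.add_re, Complex.mul_re, Complex.I_re,
      Complex.I_im]
    ring
  -- Norm bound
  set B : 𝓗 →L[ℂ] 𝓗 := (E : ℂ) • 1 - H₀ with hBdef
  have hBsa : IsSelfAdjoint B := by
    rw [hBdef]
    refine IsSelfAdjoint.sub ?_ hH₀
    rw [IsSelfAdjoint, star_smul, star_one]
    congr 1
    simp [Complex.ext_iff]
  have hBim : (inner ℂ (B w) w : ℂ).im = 0 := aux_im_zero B hBsa w
  have hvdecomp : v = B w + ((ε : ℂ) * Complex.I) • w := by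
    rw [← hAw, hAw_expand, hBdef]
    simp [sub_apply, smul_apply, hz, add_smul]
    module
  have hnormv : ‖v‖ ^ 2 = ‖B w‖ ^ 2 + ε ^ 2 * ‖w‖ ^ 2 := by
    rw [hvdecomp, @norm_add_sq ℂ]
    have hcross : RCLike.re (inner ℂ (B w) (((ε : ℂ) * Complex.I) • w) : ℂ) = 0 := by
      rw [inner_smul_right]
      simp [Complex.mul_re, Complex.mul_im, hBim]
    rw [hcross]
    have : ‖((ε : ℂ) * Complex.I) • w‖ = ε * ‖w‖ := by
      rw [norm_smul]
      simp [abs_of_pos hε]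
    rw [this]
    ring
  have hBnorm : ‖B‖ ≤ |E| + ‖H₀‖ := by
    refine (norm_sub_le _ _).trans (add_le_add ?_ le_rfl)
    rw [norm_smul]
    calc ‖(E : ℂ)‖ * ‖(1 : 𝓗 →L[ℂ] 𝓗)‖ ≤ ‖(E : ℂ)‖ * 1 := by
          exact mul_le_mul_of_nonneg_left (by rw [ContinuousLinearMap.one_def]; exact norm_id_le) (norm_nonneg _)
    _ = |E| := by simp [Complex.norm_real]
  have hBw : ‖B w‖ ≤ (|E| + ‖H₀‖) * ‖w‖ :=
    (B.le_opNorm w).trans (mul_le_mul_of_nonneg_right hBnorm (norm_nonneg w))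
  set D : ℝ := (|E| + ‖H₀‖) ^ 2 + ε ^ 2 with hD
  have hDpos : 0 < D := by positivity
  have hvle : ‖v‖ ^ 2 ≤ D * ‖w‖ ^ 2 := by
    rw [hnormv, hD]
    have h1 : ‖B w‖ ^ 2 ≤ ((|E| + ‖H₀‖) * ‖w‖) ^ 2 := by
      apply sq_le_sq' (by linarith [norm_nonneg (B w), mul_nonneg (by positivity : (0:ℝ) ≤ |E| + ‖H₀‖) (norm_nonneg w)]) hBw
    nlinarith
  rw [him]
  have : ε / D * ‖v‖ ^ 2 ≤ ε / D * (D * ‖w‖ ^ 2) :=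
    mul_le_mul_of_nonneg_left hvle (by positivity)
  calc ε / D * ‖v‖ ^ 2 ≤ ε / D * (D * ‖w‖ ^ 2) := this
  _ = ε * ‖w‖ ^ 2 := by field_simp
  _ = -(-(ε * ‖w‖ ^ 2)) := by ring
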